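/- arXiv:1108.2579 — 2 statements merged into one kernel-verified Lean document; each statement's English description precedes it below -/
import Mathlib

section
/- Let m ≥ 3 be an integer. For any integer k, the sum of C_m(a) over integers a with k·m + 1 ≤ a ≤ (k+1)·m − 1 and gcd(a, m) = 1 is congruent modulo m to the sum of C_m(a) over integers a with 1 ≤ a ≤ m − 1 and gcd(a, m) = 1. -/
/-- The Carmichael function `λ(m)`: the smallest positive integer `n` such that
`a ^ n ≡ 1 (mod m)` for every integer `a` coprime to `m`. -/
noncomputable def carmichael (m : ℕ) : ℕ :=
  sInf {n : ℕ | 0 < n ∧ ∀ a : ℤ, Int.gcd a m = 1 → a ^ n ≡ 1 [ZMOD (m : ℤ)]}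

/-- The Carmichael quotient `C_m(a) = (a^{λ(m)} - 1) / m`. -/
noncomputable def carQuot (m : ℕ) (a : ℤ) : ℤ := (a ^ carmichael m - 1) / m

lemma carmichael_spec (m : ℕ) (hm : 2 ≤ m) :
    0 < carmichael m ∧ ∀ a : ℤ, Int.gcd a m = 1 → a ^ carmichael m ≡ 1 [ZMOD (m : ℤ)] := by
  have : carmichael m ∈ {n : ℕ | 0 < n ∧ ∀ a : ℤ, Int.gcd a m = 1 → a ^ n ≡ 1 [ZMOD (m : ℤ)]} := by
    apply Nat.sInf_mem
    refine ⟨m.totient, Nat.totient_pos.mpr (by omega), fun a ha => ?_⟩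
    have hco : IsCoprime (a : ℤ) (m : ℤ) := Int.isCoprime_iff_gcd_eq_one.mpr ha
    have hunit : IsUnit ((a : ℤ) : ZMod m) := by
      have h2 := hco.map (Int.castRingHom (ZMod m))
      simp only [Int.coe_castRingHom] at h2
      rw [show (((m : ℤ) : ZMod m)) = 0 by push_cast; simp,
        isCoprime_zero_right] at h2
      exact h2
    obtain ⟨u, hu⟩ := hunit
    have hpu := ZMod.pow_totient u
    rw [← ZMod.intCast_eq_intCast_iff]
    push_cast
    rw [← hu, ← Units.val_pow_eq_pow_val, hpu, Units.val_one]
  exact this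

theorem stmt4 (m : ℕ) (hm : 3 ≤ m) (k : ℤ) :
    ∑ a ∈ (Finset.Icc (k * m + 1) ((k + 1) * m - 1)).filter (fun a => Int.gcd a m = 1),
        carQuot m a ≡
      ∑ a ∈ (Finset.Icc 1 ((m : ℤ) - 1)).filter (fun a => Int.gcd a m = 1),
        carQuot m a [ZMOD (m : ℤ)] := by
  obtain ⟨hL1, hL⟩ := carmichael_spec m (by omega)
  set L := carmichael m with hLdef
  have hm3 : (3 : ℤ) ≤ m := by exact_mod_cast hm
  have hm0 : (0 : ℤ) < m := by omega
  -- basic facts about carQuot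
  have hdvd : ∀ b : ℤ, Int.gcd b m = 1 → (m : ℤ) ∣ b ^ L - 1 := by
    intro b hb
    have h := (hL b hb).dvd
    have : b ^ L - 1 = -(1 - b ^ L) := by ring
    rw [this]
    exact dvd_neg.mpr h
  have hquot : ∀ b : ℤ, Int.gcd b m = 1 → carQuot m b * m = b ^ L - 1 := by
    intro b hb
    exact Int.ediv_mul_cancel (hdvd b hb)
  -- shifting by k*m preserves coprimality
  have hgcd_shift : ∀ b : ℤ, Int.gcd (k * m + b) m = 1 ↔ Int.gcd b m = 1 := by
    intro b
    rw [← Int.isCoprime_iff_gcd_eq_one, ← Int.isCoprime_iff_gcd_eq_one]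
    constructor
    · intro h
      rw [show k * (m : ℤ) + b = b + (m : ℤ) * k by ring] at h
      exact h.of_add_mul_left_left
    · intro h
      rw [show k * (m : ℤ) + b = b + (m : ℤ) * k by ring]
      exact h.add_mul_left_left k
  -- reindex the left-hand sum
  have hIcc : Finset.Icc (k * m + 1) ((k + 1) * m - 1) =
      (Finset.Icc (1 : ℤ) ((m : ℤ) - 1)).map (addLeftEmbedding (k * m)) := by
    rw [Finset.map_add_left_Icc]
    congr 1
    ring
  rw [← ZMod.intCast_eq_intCast_iff, hIcc, Finset.filter_map, Finset.sum_map]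
  have hfil : (Finset.Icc (1 : ℤ) ((m : ℤ) - 1)).filter
        ((fun a => Int.gcd a m = 1) ∘ addLeftEmbedding (k * m)) =
      (Finset.Icc (1 : ℤ) ((m : ℤ) - 1)).filter (fun a => Int.gcd a m = 1) := by
    apply Finset.filter_congr
    intro b _
    simpa [addLeftEmbedding_apply] using hgcd_shift b
  rw [hfil]
  set S := (Finset.Icc (1 : ℤ) ((m : ℤ) - 1)).filter (fun a => Int.gcd a m = 1) with hS
  -- the (-1) power fact
  have hneg1 : ((-1 : ZMod m)) ^ L = 1 := by
    have h := hL (-1) (by simp)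
    rw [← ZMod.intCast_eq_intCast_iff] at h
    push_cast at h
    exact h
  have hneg1' : ((-1 : ZMod m)) ^ (L - 1) = -1 := by
    have h : ((-1 : ZMod m)) ^ (L - 1) * (-1) = 1 := by
      rw [← pow_succ, Nat.sub_add_cancel hL1]
      exact hneg1
    rw [mul_neg_one] at h
    exact neg_eq_iff_eq_neg.mp h
  -- the key vanishing sum
  have hsum0 : ∑ b ∈ S, ((b : ZMod m)) ^ (L - 1) = 0 := by
    apply Finset.sum_involution (fun b _ => (m : ℤ) - b)
    · intro b hb
      have hcast : ((((m : ℤ) - b : ℤ)) : ZMod m) = -(b : ZMod m) := by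
        push_cast
        simp
      rw [hcast, neg_pow, hneg1']
      ring
    · intro b hb _ heq
      simp only [hS, Finset.mem_filter, Finset.mem_Icc] at hb
      obtain ⟨⟨hb1, hb2⟩, hbg⟩ := hb
      have hmb : (m : ℤ) = 2 * b := by linarith [sub_eq_iff_eq_add.mp heq]
      have hco : IsCoprime (b : ℤ) (m : ℤ) := Int.isCoprime_iff_gcd_eq_one.mpr hbg
      have hbdvd : b ∣ (m : ℤ) := ⟨2, by linarith⟩
      have := Int.isUnit_iff.mp (hco.isUnit_of_dvd' dvd_rfl hbdvd)
      omega
    · intro b hb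
      simp only [hS, Finset.mem_filter, Finset.mem_Icc] at hb ⊢
      obtain ⟨⟨hb1, hb2⟩, hbg⟩ := hb
      refine ⟨⟨by omega, by omega⟩, ?_⟩
      have hco : IsCoprime (b : ℤ) (m : ℤ) := Int.isCoprime_iff_gcd_eq_one.mpr hbg
      rw [← Int.isCoprime_iff_gcd_eq_one, show (m : ℤ) - b = -b + (m : ℤ) * 1 by ring]
      exact hco.neg_left.add_mul_left_left 1
    · intro b hb
      ring
  -- per-term congruence
  have hterm : ∀ b ∈ S, ((carQuot m (addLeftEmbedding (k * m) b) : ZMod m)) =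
      (carQuot m b : ZMod m) + ((b : ZMod m)) ^ (L - 1) * (k : ZMod m) * (L : ZMod m) := by
    intro b hb
    simp only [hS, Finset.mem_filter, Finset.mem_Icc] at hb
    obtain ⟨_, hbg⟩ := hb
    have hbg' : Int.gcd (k * m + b) m = 1 := (hgcd_shift b).mpr hbg
    have hsq := sq_dvd_add_pow_sub_sub ((k : ℤ) * m) b L
    have hm2 : ((m : ℤ)) ^ 2 ∣ (b + k * m) ^ L - b ^ (L - 1) * (k * m) * L - b ^ L :=
      dvd_trans ⟨k ^ 2, by ring⟩ hsq
    obtain ⟨t, ht⟩ := hm2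
    have hcc : (carQuot m (k * m + b) - carQuot m b) * m =
        (b ^ (L - 1) * k * L + m * t) * m := by
      rw [sub_mul, hquot _ hbg', hquot _ hbg]
      linear_combination ht
    have hkey : carQuot m (k * m + b) - carQuot m b = b ^ (L - 1) * k * L + m * t :=
      mul_right_cancel₀ (ne_of_gt hm0) hcc
    have hcast := congrArg (fun z : ℤ => (z : ZMod m)) hkey
    push_cast at hcast
    simp only [ZMod.natCast_self, zero_mul] at hcast
    rw [addLeftEmbedding_apply]
    linear_combination hcast
  push_cast
  rw [Finset.sum_congr rfl hterm]
  rw [Finset.sum_add_distrib]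
  simp only [← Finset.sum_mul, hsum0, zero_mul, add_zero]
end

section
/- Let m ≥ 2 and n ≥ 2 be integers with gcd(m, n) = 1, and a an integer with gcd(a, mn) = 1. Then C_{mn}(a) ≡ (λ(n)/gcd(λ(m), λ(n))) · n⁻¹ · C_m(a) (mod m), where n⁻¹ denotes a multiplicative inverse of n modulo m. -/
lemma carm_exponent_mem (m : ℕ) [NeZero m] :
    Monoid.exponent (ZMod m)ˣ ∈
      {n : ℕ | 0 < n ∧ ∀ a : ℤ, Int.gcd a m = 1 → a ^ n ≡ 1 [ZMOD (m : ℤ)]} := by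
  constructor
  · exact Monoid.ExponentExists.of_finite.exponent_pos
  · intro a ha
    have : IsCoprime a (m : ℤ) := Int.isCoprime_iff_gcd_eq_one.mpr ha
    obtain ⟨u, v, huv⟩ := this
    have hunit : IsUnit (a : ZMod m) := by
      refine IsUnit.of_mul_eq_one (u : ZMod m) ?_
      have : ((u * a + v * m : ℤ) : ZMod m) = ((1 : ℤ) : ZMod m) := by rw [huv]
      push_cast at this
      simpa [ZMod.natCast_self, mul_comm] using this
    obtain ⟨w, hw⟩ := hunit
    have hpow : (w : ZMod m) ^ Monoid.exponent (ZMod m)ˣ = 1 := by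
      rw [← Units.val_pow_eq_pow_val, Monoid.pow_exponent_eq_one, Units.val_one]
    rw [← ZMod.intCast_eq_intCast_iff]
    push_cast
    rw [hw] at hpow
    simpa using hpow

lemma carmichael_eq_exponent (m : ℕ) [NeZero m] :
    carmichael m = Monoid.exponent (ZMod m)ˣ := by
  refine le_antisymm (Nat.sInf_le (carm_exponent_mem m)) ?_
  refine le_csInf ⟨_, carm_exponent_mem m⟩ ?_
  rintro n ⟨hn, h⟩
  refine Nat.le_of_dvd hn (Monoid.exponent_dvd_of_forall_pow_eq_one fun u => ?_)
  have hc : Nat.Coprime ((u : ZMod m).val) m := ZMod.val_coe_unit_coprime u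
  have := h (((u : ZMod m).val : ℕ) : ℤ) (by rw [Int.gcd_natCast_natCast]; exact hc)
  rw [← ZMod.intCast_eq_intCast_iff] at this
  push_cast at this
  rw [ZMod.natCast_val, ZMod.cast_id] at this
  ext
  rw [Units.val_pow_eq_pow_val, Units.val_one]
  exact this

lemma pow_carmichael (m : ℕ) [NeZero m] (a : ℤ) (ha : Int.gcd a m = 1) :
    a ^ carmichael m ≡ 1 [ZMOD (m : ℤ)] := by
  rw [carmichael_eq_exponent]
  exact (carm_exponent_mem m).2 a ha

lemma carmichael_pos (m : ℕ) [NeZero m] : 0 < carmichael m := by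
  rw [carmichael_eq_exponent]
  exact Monoid.ExponentExists.of_finite.exponent_pos

lemma carmichael_mul (m n : ℕ) [NeZero m] [NeZero n] (hmn : Nat.Coprime m n) :
    carmichael (m * n) = Nat.lcm (carmichael m) (carmichael n) := by
  haveI : NeZero (m * n) := ⟨Nat.mul_ne_zero (NeZero.ne m) (NeZero.ne n)⟩
  have e : (ZMod (m * n))ˣ ≃* (ZMod m)ˣ × (ZMod n)ˣ :=
    (Units.mapEquiv (ZMod.chineseRemainder hmn).toMulEquiv).trans MulEquiv.prodUnits
  rw [carmichael_eq_exponent, carmichael_eq_exponent, carmichael_eq_exponent,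
    Monoid.exponent_eq_of_mulEquiv e, Monoid.exponent_prod, lcm_eq_nat_lcm]

lemma aux_binom (x : ℤ) (k : ℕ) : ∃ t : ℤ, (1 + x) ^ k = 1 + k * x + x ^ 2 * t := by
  induction k with
  | zero => exact ⟨0, by simp⟩
  | succ k ih =>
    obtain ⟨t, ht⟩ := ih
    exact ⟨k + t * (1 + x), by rw [pow_succ, ht]; push_cast; ring⟩

theorem stmt6 (m n : ℕ) (hm : 2 ≤ m) (hn : 2 ≤ n) (hmn : Nat.gcd m n = 1)
    (a : ℤ) (ha : Int.gcd a (m * n) = 1)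
    (b : ℤ) (hb : (n : ℤ) * b ≡ 1 [ZMOD (m : ℤ)]) :
    carQuot (m * n) a ≡
      ((carmichael n / Nat.gcd (carmichael m) (carmichael n) : ℕ) : ℤ) * b *
        carQuot m a [ZMOD (m : ℤ)] := by
  haveI : NeZero m := ⟨by omega⟩
  haveI : NeZero n := ⟨by omega⟩
  haveI : NeZero (m * n) := ⟨by positivity⟩
  have ham : Int.gcd a m = 1 := by
    have h1 : (Int.gcd a m : ℤ) ∣ (Int.gcd a (m * n) : ℤ) :=
      Int.dvd_coe_gcd (Int.gcd_dvd_left a m) ((Int.gcd_dvd_right a m).trans ⟨n, rfl⟩)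
    have h2 : Int.gcd a m ∣ Int.gcd a (m * n) := Int.ofNat_dvd.mp h1
    rw [ha] at h2
    exact Nat.eq_one_of_dvd_one h2
  set l := carmichael m with hl
  set L := carmichael (m * n) with hL
  set g := Nat.gcd (carmichael m) (carmichael n) with hg
  set k := carmichael n / g with hk
  have hg0 : g ≠ 0 := by
    intro h
    rw [hg, Nat.gcd_eq_zero_iff] at h
    exact (carmichael_pos m).ne' h.1
  -- L = l * k
  have hLlk : L = l * k := by
    obtain ⟨t, ht⟩ := Nat.gcd_dvd_right (carmichael m) (carmichael n)
    rw [← hg] at ht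
    have hkt : k = t := by
      rw [hk, ht, Nat.mul_div_cancel_left _ (Nat.pos_of_ne_zero hg0)]
    have hlcm : L = carmichael m * carmichael n / g := by
      rw [hL, carmichael_mul m n hmn, Nat.lcm, ← hg]
    rw [hlcm, ht, hkt, show carmichael m * (g * t) = carmichael m * t * g from by ring,
      Nat.mul_div_cancel _ (Nat.pos_of_ne_zero hg0)]
  set c := carQuot m a with hc
  set q := carQuot (m * n) a with hq
  have h1 : (m : ℤ) ∣ a ^ l - 1 := (pow_carmichael m a ham).symm.dvd
  have hcm : (m : ℤ) * c = a ^ l - 1 := by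
    rw [hc, carQuot, ← hl, mul_comm]
    exact Int.ediv_mul_cancel h1
  have h2 : ((m : ℤ) * n) ∣ a ^ L - 1 := by
    have := (pow_carmichael (m * n) a ha).symm.dvd
    push_cast at this
    exact this
  have hqm : (m : ℤ) * n * q = a ^ L - 1 := by
    rw [hq, carQuot, ← hL, mul_comm]
    push_cast
    exact Int.ediv_mul_cancel h2
  obtain ⟨t, ht⟩ := aux_binom ((m : ℤ) * c) k
  have hal : a ^ l = 1 + (m : ℤ) * c := by rw [hcm]; ring
  have haL : a ^ L = 1 + (k : ℤ) * ((m : ℤ) * c) + ((m : ℤ) * c) ^ 2 * t := by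
    rw [hLlk, pow_mul, hal, ht]
  -- m * n * q = k * m * c + m^2 c^2 t
  have key : (n : ℤ) * q = (k : ℤ) * c + (m : ℤ) * (c ^ 2 * t) := by
    have hm0 : (m : ℤ) ≠ 0 := by exact_mod_cast NeZero.ne m
    have : (m : ℤ) * ((n : ℤ) * q) = (m : ℤ) * ((k : ℤ) * c + (m : ℤ) * (c ^ 2 * t)) := by
      rw [show (m : ℤ) * ((n : ℤ) * q) = (m : ℤ) * n * q by ring, hqm, haL]
      ring
    exact mul_left_cancel₀ hm0 this
  obtain ⟨s, hs⟩ := Int.modEq_iff_dvd.mp hb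
  rw [Int.modEq_iff_dvd]
  exact ⟨-(b * c ^ 2 * t) - q * s, by linear_combination (-b) * key + (-q) * hs⟩
end
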